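/- Fix positive constants q0, γ, kB, T0, T1, ω and set g = √(γ²ω² + 4q0²). Over all sinusoidal controls u(t) = q1 cos(ω t − φ), the second-order average power P(q1, φ) = (kB ω q1/(2g)) (T1 sin(φ + θ) − (γ T0 ω q1)/(g q0)), where θ = arctan(2q0/(γω)), is uniquely maximized at q1* = q0 g T1/(2 γ ω T0) and φ* = π/2 − θ, with maximum value kB q0 T1²/(8 γ T0). -/

import Mathlib

open Real Set

set_option maxHeartbeats 2000000 in
/-- The second-order average power for sinusoidal controls in the overdamped model,
`P(q1, φ) = (kB ω q1/(2g)) (T1 sin(φ + θ) − (γ T0 ω q1)/(g q0))` with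
`g = √(γ²ω² + 4q0²)` and `θ = arctan(2q0/(γω))`, is uniquely maximized over
`q1 ≥ 0`, `φ ∈ [0, 2π)` at `q1* = q0 g T1/(2γω T0)`, `φ* = π/2 − θ`, with maximum
value `kB q0 T1²/(8 γ T0)`. -/
theorem stmt4 (q0 γ kB T0 T1 ω : ℝ) (hq0 : 0 < q0) (hγ : 0 < γ) (hkB : 0 < kB)
    (hT0 : 0 < T0) (hT1 : 0 < T1) (hω : 0 < ω) :
    let g : ℝ := Real.sqrt (γ ^ 2 * ω ^ 2 + 4 * q0 ^ 2)
    let θ : ℝ := Real.arctan (2 * q0 / (γ * ω))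
    let P : ℝ → ℝ → ℝ := fun q1 φ =>
      (kB * ω * q1 / (2 * g)) * (T1 * Real.sin (φ + θ) - γ * T0 * ω * q1 / (g * q0))
    let q1star : ℝ := q0 * g * T1 / (2 * γ * ω * T0)
    let φstar : ℝ := π / 2 - θ
    q1star ∈ Ici (0 : ℝ) ∧ φstar ∈ Ico 0 (2 * π) ∧
    P q1star φstar = kB * q0 * T1 ^ 2 / (8 * γ * T0) ∧
    (∀ q1 ∈ Ici (0 : ℝ), ∀ φ ∈ Ico 0 (2 * π),
      P q1 φ ≤ kB * q0 * T1 ^ 2 / (8 * γ * T0)) ∧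
    (∀ q1 ∈ Ici (0 : ℝ), ∀ φ ∈ Ico 0 (2 * π),
      P q1 φ = kB * q0 * T1 ^ 2 / (8 * γ * T0) → q1 = q1star ∧ φ = φstar) := by
  intro g θ P q1star φstar
  have hgpos : 0 < g := Real.sqrt_pos.mpr (by positivity)
  have hg : g ≠ 0 := ne_of_gt hgpos
  have hθ0 : 0 < θ := by
    have := Real.arctan_strictMono (show (0:ℝ) < 2 * q0 / (γ * ω) by positivity)
    rw [Real.arctan_zero] at this; exact this
  have hθ2 : θ < π / 2 := Real.arctan_lt_pi_div_two _
  have hpi : 0 < π := Real.pi_pos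
  have hPdef : ∀ q1 φ, P q1 φ =
      (kB * ω * q1 / (2 * g)) * (T1 * Real.sin (φ + θ) - γ * T0 * ω * q1 / (g * q0)) :=
    fun _ _ => rfl
  have hq1sdef : q1star = q0 * g * T1 / (2 * γ * ω * T0) := rfl
  have hφsdef : φstar = π / 2 - θ := rfl
  clear_value φstar q1star P θ g
  -- key identity
  have hid : ∀ q1 s : ℝ,
      kB * q0 * T1 ^ 2 / (8 * γ * T0) -
        (kB * ω * q1 / (2 * g)) * (T1 * s - γ * T0 * ω * q1 / (g * q0)) =
      (kB * q0 * T1 ^ 2 / (8 * γ * T0)) *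
        ((s - 2 * (γ * T0 * ω / (q0 * g * T1)) * q1) ^ 2 + (1 - s ^ 2)) := by
    intro q1 s
    field_simp
    ring
  have hEpos : 0 < kB * q0 * T1 ^ 2 / (8 * γ * T0) := by positivity
  refine ⟨?_, ?_, ?_, ?_, ?_⟩
  · rw [mem_Ici, hq1sdef]; positivity
  · rw [mem_Ico, hφsdef]; constructor <;> linarith
  · rw [hPdef, hq1sdef, hφsdef,
      show π / 2 - θ + θ = π / 2 by ring, Real.sin_pi_div_two]
    field_simp
    ring
  · intro q1 hq1 φ hφ
    have hs1 : Real.sin (φ + θ) ≤ 1 := Real.sin_le_one _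
    have hs2 : -1 ≤ Real.sin (φ + θ) := Real.neg_one_le_sin _
    rw [hPdef]
    have := hid q1 (Real.sin (φ + θ))
    have h2 : 0 ≤ (Real.sin (φ + θ) - 2 * (γ * T0 * ω / (q0 * g * T1)) * q1) ^ 2 +
        (1 - Real.sin (φ + θ) ^ 2) := by nlinarith [sq_nonneg (Real.sin (φ + θ) - 2 * (γ * T0 * ω / (q0 * g * T1)) * q1)]
    nlinarith [mul_nonneg hEpos.le h2]
  · intro q1 hq1 φ hφ heq
    rw [hPdef] at heq
    set s := Real.sin (φ + θ) with hs
    have hs1 : s ≤ 1 := by rw [hs]; exact Real.sin_le_one _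
    have hs2 : -1 ≤ s := by rw [hs]; exact Real.neg_one_le_sin _
    clear_value s
    have hidq := hid q1 s
    have hzero : (s - 2 * (γ * T0 * ω / (q0 * g * T1)) * q1) ^ 2 + (1 - s ^ 2) = 0 := by
      have h1 : (kB * q0 * T1 ^ 2 / (8 * γ * T0)) *
          ((s - 2 * (γ * T0 * ω / (q0 * g * T1)) * q1) ^ 2 + (1 - s ^ 2)) = 0 := by
        rw [← hidq]
        linarith
      exact (mul_eq_zero.mp h1).resolve_left (ne_of_gt hEpos)
    have hsq : 0 ≤ (s - 2 * (γ * T0 * ω / (q0 * g * T1)) * q1) ^ 2 := sq_nonneg _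
    have hs2' : 1 - s ^ 2 ≥ 0 := by nlinarith
    have hA : (s - 2 * (γ * T0 * ω / (q0 * g * T1)) * q1) = 0 := by
      have : (s - 2 * (γ * T0 * ω / (q0 * g * T1)) * q1) ^ 2 = 0 := by linarith
      exact pow_eq_zero_iff two_ne_zero |>.mp this
    have hsone : s = 1 := by
      have hs2eq : s ^ 2 = 1 := by linarith
      have hcpos : 0 < γ * T0 * ω / (q0 * g * T1) := by positivity
      have hq1' : (0:ℝ) ≤ q1 := hq1
      have hsnn : 0 ≤ s := by
        have h3 : s = 2 * (γ * T0 * ω / (q0 * g * T1)) * q1 := by linarith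
        have := mul_nonneg (mul_nonneg (by norm_num : (0:ℝ) ≤ 2) hcpos.le) hq1'
        linarith
      have hf : (s - 1) * (s + 1) = 0 := by linear_combination hs2eq
      rcases mul_eq_zero.mp hf with h | h
      · linarith
      · linarith
    have hq1eq : q1 = q1star := by
      have h4 : 2 * (γ * T0 * ω / (q0 * g * T1)) * q1 = 1 := by
        rw [← hsone]; linarith
      rw [hq1sdef]
      field_simp at h4
      rw [eq_div_iff (by positivity)]
      linear_combination h4
    refine ⟨hq1eq, ?_⟩
    -- now sin (φ + θ) = 1
    have hsin1 : Real.sin (φ + θ) = 1 := by rw [← hs]; exact hsone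
    obtain ⟨k, hk⟩ := Real.sin_eq_one_iff.mp hsin1
    have hφ0 : 0 ≤ φ := hφ.1
    have hφ2 : φ < 2 * π := hφ.2
    have h2π : (0:ℝ) < 2 * π := by positivity
    have hk0 : k = 0 := by
      have hkub' : (k : ℝ) * (2 * π) < 1 * (2 * π) := by
        linarith only [hk, hφ2, hθ2]
      have hklb' : (-1 : ℝ) * (2 * π) < (k : ℝ) * (2 * π) := by
        linarith only [hk, hφ0, hθ0, Real.pi_pos]
      have hkub : (k : ℝ) < 1 := lt_of_mul_lt_mul_right hkub' h2π.le
      have hklb : (-1 : ℝ) < (k : ℝ) := lt_of_mul_lt_mul_right hklb' h2π.le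
      have h1 : k < 1 := by exact_mod_cast hkub
      have h2 : -1 < k := by exact_mod_cast hklb
      omega
    rw [hk0] at hk
    push_cast at hk
    rw [hφsdef]
    linarith only [hk]
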